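/- Let k have characteristic 3 and define the Lie superalgebra d_{2,1} = (sp(V)⊕sp(V)⊕sp(V)) ⊕ (V⊗V⊗V), with even part sp(V)³ acting componentwise on V⊗V⊗V and odd bracket [u₁⊗u₂⊗u₃, v₁⊗v₂⊗v₃] = −Σ_{i=1}^{3} (∏_{j≠i} ⟨u_j|v_j⟩) ν_i(γ_{u_i,v_i}), where ν_i is the inclusion into the i-th component. Then d_{2,1} is a Lie superalgebra: in particular the super-Jacobi identity holds on three odd elements. -/

import Mathlib

open scoped TensorProduct

section

variable {k V : Type*} [Field k] [AddCommGroup V] [Module k V]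

/-- The operator `γ_{x,y} : z ↦ ⟨x|z⟩y + ⟨y|z⟩x`. -/
noncomputable def gamma (B : LinearMap.BilinForm k V) (x y : V) : V →ₗ[k] V :=
  (B x).smulRight y + (B y).smulRight x

/-- The element `[[u₁⊗u₂⊗u₃, v₁⊗v₂⊗v₃], w₁⊗w₂⊗w₃]` of the odd part
`V⊗V⊗V` of `d_{2,1}`: the bracket of two odd elements is
`−Σᵢ (∏_{j≠i} ⟨u_j|v_j⟩) νᵢ(γ_{uᵢ,vᵢ})`, acting componentwise on `w₁⊗w₂⊗w₃`. -/
noncomputable def d21OddJac (B : LinearMap.BilinForm k V)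
    (u v w : Fin 3 → V) : V ⊗[k] (V ⊗[k] V) :=
  -((B (u 1) (v 1) * B (u 2) (v 2)) •
      ((gamma B (u 0) (v 0)) (w 0) ⊗ₜ[k] (w 1 ⊗ₜ[k] w 2))
    + (B (u 0) (v 0) * B (u 2) (v 2)) •
      ((w 0) ⊗ₜ[k] ((gamma B (u 1) (v 1)) (w 1) ⊗ₜ[k] w 2))
    + (B (u 0) (v 0) * B (u 1) (v 1)) •
      ((w 0) ⊗ₜ[k] (w 1 ⊗ₜ[k] (gamma B (u 2) (v 2)) (w 2))))

end

set_option maxHeartbeats 4000000 in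
/-- Over a field of characteristic 3, the bracket of
`d_{2,1} = (sp(V)⊕sp(V)⊕sp(V)) ⊕ (V⊗V⊗V)` satisfies the super-Jacobi identity
on three odd elements:
`[[x,y],z] + [[y,z],x] + [[z,x],y] = 0` for decomposable odd elements. -/
theorem stmt18 (k : Type*) [Field k] [CharP k 3]
    (V : Type*) [AddCommGroup V] [Module k V]
    (hdim : Module.finrank k V = 2)
    (B : LinearMap.BilinForm k V) (halt : B.IsAlt) (hnd : B.Nondegenerate) :
    ∀ u v w : Fin 3 → V,
      d21OddJac B u v w + d21OddJac B v w u + d21OddJac B w u v = 0 := by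
  intro u v w
  have h3 : (3:k) = 0 := CharP.cast_eq_zero k 3
  have hfd : FiniteDimensional k V := FiniteDimensional.of_finrank_eq_succ hdim
  have hV : Nontrivial V := Module.nontrivial_of_finrank_eq_succ hdim
  obtain ⟨e0, he0⟩ := exists_ne (0 : V)
  have hy : ∃ y, B e0 y ≠ 0 := by
    by_contra h
    push_neg at h
    exact he0 (hnd.1 e0 h)
  obtain ⟨y, hy⟩ := hy
  set e1 := (B e0 y)⁻¹ • y with he1
  have h01 : B e0 e1 = 1 := by
    rw [he1, map_smul, smul_eq_mul, inv_mul_cancel₀ hy]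
  have h00 : B e0 e0 = 0 := halt e0
  have h11 : B e1 e1 = 0 := halt e1
  have h10 : B e1 e0 = -1 := by rw [← LinearMap.IsAlt.neg halt e0 e1, h01]
  have li : LinearIndependent k ![e0, e1] := by
    rw [LinearIndependent.pair_iff]
    intro s t hst
    have ht : t = 0 := by
      have := congrArg (B e0) hst
      simpa [map_add, map_smul, h00, h01] using this
    subst ht
    simp only [zero_smul, add_zero, smul_eq_zero] at hst
    exact ⟨hst.resolve_right he0, rfl⟩
  have hs : Submodule.span k (Set.range ![e0, e1]) = ⊤ := by
    rw [← coe_basisOfLinearIndependentOfCardEqFinrank li (by simp [hdim])]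
    exact Module.Basis.span_eq _
  have hspan : ∀ x : V, ∃ p q : k, x = p • e0 + q • e1 := by
    intro x
    have hx : x ∈ Submodule.span k {e0, e1} := by
      have hr : Set.range ![e0, e1] = {e0, e1} := by
        simp [Matrix.range_cons, Matrix.range_empty, Set.pair_comm]
      rw [← hr, hs]; trivial
    obtain ⟨p, q, h⟩ := Submodule.mem_span_pair.mp hx
    exact ⟨p, q, h.symm⟩

  obtain ⟨pu0, qu0, hu0⟩ := hspan (u 0)
  obtain ⟨pu1, qu1, hu1⟩ := hspan (u 1)
  obtain ⟨pu2, qu2, hu2⟩ := hspan (u 2)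
  obtain ⟨pv0, qv0, hv0⟩ := hspan (v 0)
  obtain ⟨pv1, qv1, hv1⟩ := hspan (v 1)
  obtain ⟨pv2, qv2, hv2⟩ := hspan (v 2)
  obtain ⟨pw0, qw0, hw0⟩ := hspan (w 0)
  obtain ⟨pw1, qw1, hw1⟩ := hspan (w 1)
  obtain ⟨pw2, qw2, hw2⟩ := hspan (w 2)
  simp only [d21OddJac, gamma]
  rw [hu0, hu1, hu2, hv0, hv1, hv2, hw0, hw1, hw2]
  simp only [map_add, map_smul, LinearMap.add_apply, LinearMap.smul_apply,
    LinearMap.smulRight_apply, smul_eq_mul, h00, h01, h10, h11,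
    TensorProduct.add_tmul, TensorProduct.tmul_add, ← TensorProduct.smul_tmul',
    TensorProduct.tmul_smul, smul_smul, smul_add, mul_zero, zero_mul, mul_one,
    mul_neg, neg_neg, add_zero, zero_add, neg_add_rev, smul_neg, neg_smul]
  match_scalars
  all_goals (first
    | linear_combination (2*qu0*pv0*pw0*qu1*pv1*pw1*qu2*pv2*pw2 - qu0*pv0*pw0*qu1*pv1*pw1*pu2*qv2*pw2 - qu0*pv0*pw0*qu1*pv1*pw1*pu2*pv2*qw2 - qu0*pv0*pw0*pu1*qv1*pw1*qu2*pv2*pw2 - qu0*pv0*pw0*pu1*qv1*pw1*pu2*qv2*pw2 + 2*qu0*pv0*pw0*pu1*qv1*pw1*pu2*pv2*qw2 - qu0*pv0*pw0*pu1*pv1*qw1*qu2*pv2*pw2 + 2*qu0*pv0*pw0*pu1*pv1*qw1*pu2*qv2*pw2 - qu0*pv0*pw0*pu1*pv1*qw1*pu2*pv2*qw2 - pu0*qv0*pw0*qu1*pv1*pw1*qu2*pv2*pw2 - pu0*qv0*pw0*qu1*pv1*pw1*pu2*qv2*pw2 + 2*pu0*qv0*pw0*qu1*pv1*pw1*pu2*pv2*qw2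 - pu0*qv0*pw0*pu1*qv1*pw1*qu2*pv2*pw2 + 2*pu0*qv0*pw0*pu1*qv1*pw1*pu2*qv2*pw2 - pu0*qv0*pw0*pu1*qv1*pw1*pu2*pv2*qw2 + 2*pu0*qv0*pw0*pu1*pv1*qw1*qu2*pv2*pw2 - pu0*qv0*pw0*pu1*pv1*qw1*pu2*qv2*pw2 - pu0*qv0*pw0*pu1*pv1*qw1*pu2*pv2*qw2 - pu0*pv0*qw0*qu1*pv1*pw1*qu2*pv2*pw2 + 2*pu0*pv0*qw0*qu1*pv1*pw1*pu2*qv2*pw2 - pu0*pv0*qw0*qu1*pv1*pw1*pu2*pv2*qw2 + 2*pu0*pv0*qw0*pu1*qv1*pw1*qu2*pv2*pw2 - pu0*pv0*qw0*pu1*qv1*pw1*pu2*qv2*pw2 - pu0*pv0*qw0*pu1*qv1*pw1*pu2*pv2*qw2 - pu0*pv0*qw0*pu1*pv1*qw1*qu2*pv2*pw2 - pu0*pv0*qw0*pu1*pv1*qw1*pu2*qv2*pw2 + 2*pu0*pv0*qw0*pu1*pv1*qw1*pu2*pv2*qw2) * h3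
    | linear_combination (qu0*pv0*pw0*qu1*pv1*pw1*qu2*qv2*pw2 + qu0*pv0*pw0*qu1*pv1*pw1*qu2*pv2*qw2 - 2*qu0*pv0*pw0*qu1*pv1*pw1*pu2*qv2*qw2 - 2*qu0*pv0*pw0*pu1*qv1*pw1*qu2*qv2*pw2 + qu0*pv0*pw0*pu1*qv1*pw1*qu2*pv2*qw2 + qu0*pv0*pw0*pu1*qv1*pw1*pu2*qv2*qw2 + qu0*pv0*pw0*pu1*pv1*qw1*qu2*qv2*pw2 - 2*qu0*pv0*pw0*pu1*pv1*qw1*qu2*pv2*qw2 + qu0*pv0*pw0*pu1*pv1*qw1*pu2*qv2*qw2 - 2*pu0*qv0*pw0*qu1*pv1*pw1*qu2*qv2*pw2 + pu0*qv0*pw0*qu1*pv1*pw1*qu2*pv2*qw2 + pu0*qv0*pw0*qu1*pv1*pw1*pu2*qv2*qw2 + pu0*qv0*pw0*pu1*qv1*pw1*qu2*qv2*pw2 - 2*pu0*qv0*pw0*pu1*qv1*pw1*qu2*pv2*qw2 + pu0*qv0*pw0*pu1*qv1*pw1*pu2*qv2*qw2 + pu0*qv0*pw0*pu1*pv1*qw1*qu2*qv2*pw2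 + pu0*qv0*pw0*pu1*pv1*qw1*qu2*pv2*qw2 - 2*pu0*qv0*pw0*pu1*pv1*qw1*pu2*qv2*qw2 + pu0*pv0*qw0*qu1*pv1*pw1*qu2*qv2*pw2 - 2*pu0*pv0*qw0*qu1*pv1*pw1*qu2*pv2*qw2 + pu0*pv0*qw0*qu1*pv1*pw1*pu2*qv2*qw2 + pu0*pv0*qw0*pu1*qv1*pw1*qu2*qv2*pw2 + pu0*pv0*qw0*pu1*qv1*pw1*qu2*pv2*qw2 - 2*pu0*pv0*qw0*pu1*qv1*pw1*pu2*qv2*qw2 - 2*pu0*pv0*qw0*pu1*pv1*qw1*qu2*qv2*pw2 + pu0*pv0*qw0*pu1*pv1*qw1*qu2*pv2*qw2 + pu0*pv0*qw0*pu1*pv1*qw1*pu2*qv2*qw2) * h3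
    | linear_combination (qu0*pv0*pw0*qu1*qv1*pw1*qu2*pv2*pw2 - 2*qu0*pv0*pw0*qu1*qv1*pw1*pu2*qv2*pw2 + qu0*pv0*pw0*qu1*qv1*pw1*pu2*pv2*qw2 + qu0*pv0*pw0*qu1*pv1*qw1*qu2*pv2*pw2 + qu0*pv0*pw0*qu1*pv1*qw1*pu2*qv2*pw2 - 2*qu0*pv0*pw0*qu1*pv1*qw1*pu2*pv2*qw2 - 2*qu0*pv0*pw0*pu1*qv1*qw1*qu2*pv2*pw2 + qu0*pv0*pw0*pu1*qv1*qw1*pu2*qv2*pw2 + qu0*pv0*pw0*pu1*qv1*qw1*pu2*pv2*qw2 - 2*pu0*qv0*pw0*qu1*qv1*pw1*qu2*pv2*pw2 + pu0*qv0*pw0*qu1*qv1*pw1*pu2*qv2*pw2 + pu0*qv0*pw0*qu1*qv1*pw1*pu2*pv2*qw2 + pu0*qv0*pw0*qu1*pv1*qw1*qu2*pv2*pw2 - 2*pu0*qv0*pw0*qu1*pv1*qw1*pu2*qv2*pw2 + pu0*qv0*pw0*qu1*pv1*qw1*pu2*pv2*qw2 + pu0*qv0*pw0*pu1*qv1*qw1*qu2*pv2*pw2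 + pu0*qv0*pw0*pu1*qv1*qw1*pu2*qv2*pw2 - 2*pu0*qv0*pw0*pu1*qv1*qw1*pu2*pv2*qw2 + pu0*pv0*qw0*qu1*qv1*pw1*qu2*pv2*pw2 + pu0*pv0*qw0*qu1*qv1*pw1*pu2*qv2*pw2 - 2*pu0*pv0*qw0*qu1*qv1*pw1*pu2*pv2*qw2 - 2*pu0*pv0*qw0*qu1*pv1*qw1*qu2*pv2*pw2 + pu0*pv0*qw0*qu1*pv1*qw1*pu2*qv2*pw2 + pu0*pv0*qw0*qu1*pv1*qw1*pu2*pv2*qw2 + pu0*pv0*qw0*pu1*qv1*qw1*qu2*pv2*pw2 - 2*pu0*pv0*qw0*pu1*qv1*qw1*pu2*qv2*pw2 + pu0*pv0*qw0*pu1*qv1*qw1*pu2*pv2*qw2) * h3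
    | linear_combination (- qu0*pv0*pw0*qu1*qv1*pw1*qu2*qv2*pw2 + 2*qu0*pv0*pw0*qu1*qv1*pw1*qu2*pv2*qw2 - qu0*pv0*pw0*qu1*qv1*pw1*pu2*qv2*qw2 + 2*qu0*pv0*pw0*qu1*pv1*qw1*qu2*qv2*pw2 - qu0*pv0*pw0*qu1*pv1*qw1*qu2*pv2*qw2 - qu0*pv0*pw0*qu1*pv1*qw1*pu2*qv2*qw2 - qu0*pv0*pw0*pu1*qv1*qw1*qu2*qv2*pw2 - qu0*pv0*pw0*pu1*qv1*qw1*qu2*pv2*qw2 + 2*qu0*pv0*pw0*pu1*qv1*qw1*pu2*qv2*qw2 - pu0*qv0*pw0*qu1*qv1*pw1*qu2*qv2*pw2 - pu0*qv0*pw0*qu1*qv1*pw1*qu2*pv2*qw2 + 2*pu0*qv0*pw0*qu1*qv1*pw1*pu2*qv2*qw2 - pu0*qv0*pw0*qu1*pv1*qw1*qu2*qv2*pw2 + 2*pu0*qv0*pw0*qu1*pv1*qw1*qu2*pv2*qw2 - pu0*qv0*pw0*qu1*pv1*qw1*pu2*qv2*qw2 + 2*pu0*qv0*pw0*pu1*qv1*qw1*qu2*qv2*pw2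 - pu0*qv0*pw0*pu1*qv1*qw1*qu2*pv2*qw2 - pu0*qv0*pw0*pu1*qv1*qw1*pu2*qv2*qw2 + 2*pu0*pv0*qw0*qu1*qv1*pw1*qu2*qv2*pw2 - pu0*pv0*qw0*qu1*qv1*pw1*qu2*pv2*qw2 - pu0*pv0*qw0*qu1*qv1*pw1*pu2*qv2*qw2 - pu0*pv0*qw0*qu1*pv1*qw1*qu2*qv2*pw2 - pu0*pv0*qw0*qu1*pv1*qw1*qu2*pv2*qw2 + 2*pu0*pv0*qw0*qu1*pv1*qw1*pu2*qv2*qw2 - pu0*pv0*qw0*pu1*qv1*qw1*qu2*qv2*pw2 + 2*pu0*pv0*qw0*pu1*qv1*qw1*qu2*pv2*qw2 - pu0*pv0*qw0*pu1*qv1*qw1*pu2*qv2*qw2) * h3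
    | linear_combination (qu0*qv0*pw0*qu1*pv1*pw1*qu2*pv2*pw2 - 2*qu0*qv0*pw0*qu1*pv1*pw1*pu2*qv2*pw2 + qu0*qv0*pw0*qu1*pv1*pw1*pu2*pv2*qw2 - 2*qu0*qv0*pw0*pu1*qv1*pw1*qu2*pv2*pw2 + qu0*qv0*pw0*pu1*qv1*pw1*pu2*qv2*pw2 + qu0*qv0*pw0*pu1*qv1*pw1*pu2*pv2*qw2 + qu0*qv0*pw0*pu1*pv1*qw1*qu2*pv2*pw2 + qu0*qv0*pw0*pu1*pv1*qw1*pu2*qv2*pw2 - 2*qu0*qv0*pw0*pu1*pv1*qw1*pu2*pv2*qw2 + qu0*pv0*qw0*qu1*pv1*pw1*qu2*pv2*pw2 + qu0*pv0*qw0*qu1*pv1*pw1*pu2*qv2*pw2 - 2*qu0*pv0*qw0*qu1*pv1*pw1*pu2*pv2*qw2 + qu0*pv0*qw0*pu1*qv1*pw1*qu2*pv2*pw2 - 2*qu0*pv0*qw0*pu1*qv1*pw1*pu2*qv2*pw2 + qu0*pv0*qw0*pu1*qv1*pw1*pu2*pv2*qw2 - 2*qu0*pv0*qw0*pu1*pv1*qw1*qu2*pv2*pw2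 + qu0*pv0*qw0*pu1*pv1*qw1*pu2*qv2*pw2 + qu0*pv0*qw0*pu1*pv1*qw1*pu2*pv2*qw2 - 2*pu0*qv0*qw0*qu1*pv1*pw1*qu2*pv2*pw2 + pu0*qv0*qw0*qu1*pv1*pw1*pu2*qv2*pw2 + pu0*qv0*qw0*qu1*pv1*pw1*pu2*pv2*qw2 + pu0*qv0*qw0*pu1*qv1*pw1*qu2*pv2*pw2 + pu0*qv0*qw0*pu1*qv1*pw1*pu2*qv2*pw2 - 2*pu0*qv0*qw0*pu1*qv1*pw1*pu2*pv2*qw2 + pu0*qv0*qw0*pu1*pv1*qw1*qu2*pv2*pw2 - 2*pu0*qv0*qw0*pu1*pv1*qw1*pu2*qv2*pw2 + pu0*qv0*qw0*pu1*pv1*qw1*pu2*pv2*qw2) * h3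
    | linear_combination (- qu0*qv0*pw0*qu1*pv1*pw1*qu2*qv2*pw2 + 2*qu0*qv0*pw0*qu1*pv1*pw1*qu2*pv2*qw2 - qu0*qv0*pw0*qu1*pv1*pw1*pu2*qv2*qw2 - qu0*qv0*pw0*pu1*qv1*pw1*qu2*qv2*pw2 - qu0*qv0*pw0*pu1*qv1*pw1*qu2*pv2*qw2 + 2*qu0*qv0*pw0*pu1*qv1*pw1*pu2*qv2*qw2 + 2*qu0*qv0*pw0*pu1*pv1*qw1*qu2*qv2*pw2 - qu0*qv0*pw0*pu1*pv1*qw1*qu2*pv2*qw2 - qu0*qv0*pw0*pu1*pv1*qw1*pu2*qv2*qw2 + 2*qu0*pv0*qw0*qu1*pv1*pw1*qu2*qv2*pw2 - qu0*pv0*qw0*qu1*pv1*pw1*qu2*pv2*qw2 - qu0*pv0*qw0*qu1*pv1*pw1*pu2*qv2*qw2 - qu0*pv0*qw0*pu1*qv1*pw1*qu2*qv2*pw2 + 2*qu0*pv0*qw0*pu1*qv1*pw1*qu2*pv2*qw2 - qu0*pv0*qw0*pu1*qv1*pw1*pu2*qv2*qw2 - qu0*pv0*qw0*pu1*pv1*qw1*qu2*qv2*pw2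 - qu0*pv0*qw0*pu1*pv1*qw1*qu2*pv2*qw2 + 2*qu0*pv0*qw0*pu1*pv1*qw1*pu2*qv2*qw2 - pu0*qv0*qw0*qu1*pv1*pw1*qu2*qv2*pw2 - pu0*qv0*qw0*qu1*pv1*pw1*qu2*pv2*qw2 + 2*pu0*qv0*qw0*qu1*pv1*pw1*pu2*qv2*qw2 + 2*pu0*qv0*qw0*pu1*qv1*pw1*qu2*qv2*pw2 - pu0*qv0*qw0*pu1*qv1*pw1*qu2*pv2*qw2 - pu0*qv0*qw0*pu1*qv1*pw1*pu2*qv2*qw2 - pu0*qv0*qw0*pu1*pv1*qw1*qu2*qv2*pw2 + 2*pu0*qv0*qw0*pu1*pv1*qw1*qu2*pv2*qw2 - pu0*qv0*qw0*pu1*pv1*qw1*pu2*qv2*qw2) * h3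
    | linear_combination (- qu0*qv0*pw0*qu1*qv1*pw1*qu2*pv2*pw2 - qu0*qv0*pw0*qu1*qv1*pw1*pu2*qv2*pw2 + 2*qu0*qv0*pw0*qu1*qv1*pw1*pu2*pv2*qw2 + 2*qu0*qv0*pw0*qu1*pv1*qw1*qu2*pv2*pw2 - qu0*qv0*pw0*qu1*pv1*qw1*pu2*qv2*pw2 - qu0*qv0*pw0*qu1*pv1*qw1*pu2*pv2*qw2 - qu0*qv0*pw0*pu1*qv1*qw1*qu2*pv2*pw2 + 2*qu0*qv0*pw0*pu1*qv1*qw1*pu2*qv2*pw2 - qu0*qv0*pw0*pu1*qv1*qw1*pu2*pv2*qw2 + 2*qu0*pv0*qw0*qu1*qv1*pw1*qu2*pv2*pw2 - qu0*pv0*qw0*qu1*qv1*pw1*pu2*qv2*pw2 - qu0*pv0*qw0*qu1*qv1*pw1*pu2*pv2*qw2 - qu0*pv0*qw0*qu1*pv1*qw1*qu2*pv2*pw2 + 2*qu0*pv0*qw0*qu1*pv1*qw1*pu2*qv2*pw2 - qu0*pv0*qw0*qu1*pv1*qw1*pu2*pv2*qw2 - qu0*pv0*qw0*pu1*qv1*qw1*qu2*pv2*pw2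 - qu0*pv0*qw0*pu1*qv1*qw1*pu2*qv2*pw2 + 2*qu0*pv0*qw0*pu1*qv1*qw1*pu2*pv2*qw2 - pu0*qv0*qw0*qu1*qv1*pw1*qu2*pv2*pw2 + 2*pu0*qv0*qw0*qu1*qv1*pw1*pu2*qv2*pw2 - pu0*qv0*qw0*qu1*qv1*pw1*pu2*pv2*qw2 - pu0*qv0*qw0*qu1*pv1*qw1*qu2*pv2*pw2 - pu0*qv0*qw0*qu1*pv1*qw1*pu2*qv2*pw2 + 2*pu0*qv0*qw0*qu1*pv1*qw1*pu2*pv2*qw2 + 2*pu0*qv0*qw0*pu1*qv1*qw1*qu2*pv2*pw2 - pu0*qv0*qw0*pu1*qv1*qw1*pu2*qv2*pw2 - pu0*qv0*qw0*pu1*qv1*qw1*pu2*pv2*qw2) * h3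
    | linear_combination (- 2*qu0*qv0*pw0*qu1*qv1*pw1*qu2*qv2*pw2 + qu0*qv0*pw0*qu1*qv1*pw1*qu2*pv2*qw2 + qu0*qv0*pw0*qu1*qv1*pw1*pu2*qv2*qw2 + qu0*qv0*pw0*qu1*pv1*qw1*qu2*qv2*pw2 + qu0*qv0*pw0*qu1*pv1*qw1*qu2*pv2*qw2 - 2*qu0*qv0*pw0*qu1*pv1*qw1*pu2*qv2*qw2 + qu0*qv0*pw0*pu1*qv1*qw1*qu2*qv2*pw2 - 2*qu0*qv0*pw0*pu1*qv1*qw1*qu2*pv2*qw2 + qu0*qv0*pw0*pu1*qv1*qw1*pu2*qv2*qw2 + qu0*pv0*qw0*qu1*qv1*pw1*qu2*qv2*pw2 + qu0*pv0*qw0*qu1*qv1*pw1*qu2*pv2*qw2 - 2*qu0*pv0*qw0*qu1*qv1*pw1*pu2*qv2*qw2 + qu0*pv0*qw0*qu1*pv1*qw1*qu2*qv2*pw2 - 2*qu0*pv0*qw0*qu1*pv1*qw1*qu2*pv2*qw2 + qu0*pv0*qw0*qu1*pv1*qw1*pu2*qv2*qw2 - 2*qu0*pv0*qw0*pu1*qv1*qw1*qu2*qv2*pw2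 + qu0*pv0*qw0*pu1*qv1*qw1*qu2*pv2*qw2 + qu0*pv0*qw0*pu1*qv1*qw1*pu2*qv2*qw2 + pu0*qv0*qw0*qu1*qv1*pw1*qu2*qv2*pw2 - 2*pu0*qv0*qw0*qu1*qv1*pw1*qu2*pv2*qw2 + pu0*qv0*qw0*qu1*qv1*pw1*pu2*qv2*qw2 - 2*pu0*qv0*qw0*qu1*pv1*qw1*qu2*qv2*pw2 + pu0*qv0*qw0*qu1*pv1*qw1*qu2*pv2*qw2 + pu0*qv0*qw0*qu1*pv1*qw1*pu2*qv2*qw2 + pu0*qv0*qw0*pu1*qv1*qw1*qu2*qv2*pw2 + pu0*qv0*qw0*pu1*qv1*qw1*qu2*pv2*qw2 - 2*pu0*qv0*qw0*pu1*qv1*qw1*pu2*qv2*qw2) * h3)
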